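/- Let X and Y be nonnegative real random variables on a common probability space, with Y integrable. Let a > 0, b > 0 and δ > 0 be reals, and let ε̃ : (0,∞) → [0,∞) be a function such that Pr[X ≤ a and Y ≥ y] ≤ ε̃(y) for every y > 0. Let (b_k)_{k≥0} be a nondecreasing sequence of reals with b₀ = b and b_k → ∞ as k → ∞. Let E[Y | X] denote the conditional expectation of Y given the σ-algebra generated by X. Then Pr[ X ≤ a and E[Y | X] ≥ b + δ ] ≤ (1/δ)·Σ_{k=0}^{∞} b_{k+1}·ε̃(b_k). -/

import Mathlib

open MeasureTheory

/-- **Bounding the probability that a conditional expectation is large (Lemma 6 in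
Leverrier's paper).** If `Pr[X ≤ a ∧ Y ≥ y] ≤ ε̃(y)` for all `y > 0` and `(b_k)` is a
nondecreasing sequence with `b₀ = b` tending to infinity, then
`Pr[X ≤ a ∧ E[Y|X] ≥ b + δ] ≤ (1/δ) ∑_k b_{k+1} ε̃(b_k)`. -/
theorem condexp_large_of_tail_bounds
    {Ω : Type*} [MeasurableSpace Ω] (μ : Measure Ω) [IsProbabilityMeasure μ]
    (X Y : Ω → ℝ) (hXmeas : Measurable X)
    (hXnn : ∀ ω, 0 ≤ X ω) (hYnn : ∀ ω, 0 ≤ Y ω) (hYint : Integrable Y μ)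
    (a b δ : ℝ) (ha : 0 < a) (hb : 0 < b) (hδ : 0 < δ)
    (etil : ℝ → ℝ) (hetil : ∀ y, 0 < y → 0 ≤ etil y)
    (hbound : ∀ y, 0 < y → (μ {ω | X ω ≤ a ∧ y ≤ Y ω}).toReal ≤ etil y)
    (bs : ℕ → ℝ) (hbs : Monotone bs) (hbs0 : bs 0 = b)
    (hbstop : Filter.Tendsto bs Filter.atTop Filter.atTop) :
    μ {ω | X ω ≤ a ∧
        b + δ ≤ (μ[Y | MeasurableSpace.comap X (inferInstance : MeasurableSpace ℝ)]) ω}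
      ≤ ENNReal.ofReal (1 / δ) * ∑' k : ℕ, ENNReal.ofReal (bs (k + 1) * etil (bs k)) := by
  classical
  have hm := hXmeas.comap_le
  set Z : Ω → ℝ := μ[Y | MeasurableSpace.comap X (inferInstance : MeasurableSpace ℝ)]
    with hZ_def
  set B : Set Ω := {ω | X ω ≤ a ∧ b + δ ≤ Z ω} with hB_def
  set S : ENNReal := ∑' k : ℕ, ENNReal.ofReal (bs (k + 1) * etil (bs k)) with hS_def
  -- positivity of bs
  have hbspos : ∀ k, 0 < bs k := by
    intro k
    have := hbs (Nat.zero_le k)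
    rw [hbs0] at this
    linarith
  -- measurability of B
  have hBm : MeasurableSet[MeasurableSpace.comap X (inferInstance : MeasurableSpace ℝ)] B := by
    have h1 : MeasurableSet[MeasurableSpace.comap X (inferInstance : MeasurableSpace ℝ)] {ω | X ω ≤ a} := ⟨Set.Iic a, measurableSet_Iic, rfl⟩
    have h2 : MeasurableSet[MeasurableSpace.comap X (inferInstance : MeasurableSpace ℝ)] {ω | b + δ ≤ Z ω} :=
      measurableSet_le measurable_const stronglyMeasurable_condExp.measurable
    exact h1.inter h2
  have hB : MeasurableSet B := hm _ hBm
  have hBfin : μ B ≠ ⊤ := measure_ne_top μ B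
  -- Step 1: (b+δ) μ(B) ≤ ∫_B Y
  have h1 : (b + δ) * (μ B).toReal ≤ ∫ ω in B, Y ω ∂μ := by
    have := setIntegral_ge_of_const_le hB hBfin (fun ω hω => hω.2)
      integrable_condExp.integrableOn
    rw [setIntegral_condExp hm hYint hBm, smul_eq_mul, Measure.real, mul_comm] at this
    exact this
  -- Step 2: in ENNReal
  have h2 : ENNReal.ofReal (b + δ) * μ B ≤ ∫⁻ ω in B, ENNReal.ofReal (Y ω) ∂μ := by
    have heq : ENNReal.ofReal (∫ ω in B, Y ω ∂μ) = ∫⁻ ω in B, ENNReal.ofReal (Y ω) ∂μ :=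
      ofReal_integral_eq_lintegral_ofReal hYint.integrableOn
        (Filter.Eventually.of_forall (fun ω => hYnn ω))
    calc ENNReal.ofReal (b + δ) * μ B
        = ENNReal.ofReal ((b + δ) * (μ B).toReal) := by
          rw [ENNReal.ofReal_mul (by positivity), ENNReal.ofReal_toReal hBfin]
      _ ≤ ENNReal.ofReal (∫ ω in B, Y ω ∂μ) := ENNReal.ofReal_le_ofReal h1
      _ = _ := heq
  -- Measurable version of Y
  obtain ⟨Y', hY'meas, hYY'⟩ : ∃ Y' : Ω → ℝ, Measurable Y' ∧ Y =ᵐ[μ] Y' := by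
    exact ⟨hYint.aemeasurable.mk Y, hYint.aemeasurable.measurable_mk, hYint.aemeasurable.ae_eq_mk⟩
  have hYlint : (∫⁻ ω in B, ENNReal.ofReal (Y ω) ∂μ) = ∫⁻ ω in B, ENNReal.ofReal (Y' ω) ∂μ := by
    refine lintegral_congr_ae ?_
    filter_upwards [ae_restrict_of_ae hYY'] with ω hω
    rw [hω]
  -- pointwise bound
  have hpt : ∀ ω, ENNReal.ofReal (Y' ω) ≤
      ENNReal.ofReal b + ∑' k : ℕ,
        Set.indicator {ω' | bs k ≤ Y' ω'} (fun _ => ENNReal.ofReal (bs (k + 1))) ω := by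
    intro ω
    by_cases hcase : Y' ω < b
    · exact le_trans (ENNReal.ofReal_le_ofReal hcase.le) le_self_add
    push_neg at hcase
    obtain ⟨K, hK⟩ : ∃ K, ∀ k ≥ K, Y' ω < bs k := by
      obtain ⟨K, hK⟩ := Filter.eventually_atTop.mp ((Filter.tendsto_atTop.mp hbstop) (Y' ω + 1))
      exact ⟨K, fun k hk => lt_of_lt_of_le (lt_add_one _) (hK k hk)⟩
    set P : ℕ → Prop := fun k => bs k ≤ Y' ω with hP_def
    set n : ℕ := Nat.findGreatest P K with hn_def
    have hP0 : P 0 := by simpa [hP_def, hbs0] using hcase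
    have hPn : P n := Nat.findGreatest_spec (Nat.zero_le K) hP0
    have hnotn1 : ¬ P (n + 1) := by
      by_cases h : n + 1 ≤ K
      · exact Nat.findGreatest_is_greatest (Nat.lt_succ_self n) h
      · push_neg at h
        exact not_le.mpr (hK (n + 1) (by omega))
    have hYlt : Y' ω < bs (n + 1) := not_le.mp hnotn1
    calc ENNReal.ofReal (Y' ω) ≤ ENNReal.ofReal (bs (n + 1)) :=
          ENNReal.ofReal_le_ofReal hYlt.le
      _ = Set.indicator {ω' | bs n ≤ Y' ω'} (fun _ => ENNReal.ofReal (bs (n + 1))) ω := by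
          rw [Set.indicator_of_mem (show ω ∈ {ω' | bs n ≤ Y' ω'} from hPn)]
      _ ≤ ∑' k : ℕ, Set.indicator {ω' | bs k ≤ Y' ω'}
            (fun _ => ENNReal.ofReal (bs (k + 1))) ω := ENNReal.le_tsum n
      _ ≤ _ := le_add_self
  -- Step 3: integrate pointwise bound over B
  have h3 : (∫⁻ ω in B, ENNReal.ofReal (Y' ω) ∂μ) ≤
      ENNReal.ofReal b * μ B +
        ∑' k : ℕ, ENNReal.ofReal (bs (k + 1)) * μ ({ω' | bs k ≤ Y' ω'} ∩ B) := by
    have hsets : ∀ k : ℕ, MeasurableSet {ω' | bs k ≤ Y' ω'} := fun k =>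
      measurableSet_le measurable_const hY'meas
    calc (∫⁻ ω in B, ENNReal.ofReal (Y' ω) ∂μ)
        ≤ ∫⁻ ω in B, (ENNReal.ofReal b + ∑' k : ℕ,
            Set.indicator {ω' | bs k ≤ Y' ω'} (fun _ => ENNReal.ofReal (bs (k + 1))) ω) ∂μ :=
          lintegral_mono (fun ω => hpt ω)
      _ = ENNReal.ofReal b * μ B + ∫⁻ ω in B, (∑' k : ℕ,
            Set.indicator {ω' | bs k ≤ Y' ω'} (fun _ => ENNReal.ofReal (bs (k + 1))) ω) ∂μ := by
          rw [lintegral_add_left measurable_const, setLIntegral_const]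
      _ = ENNReal.ofReal b * μ B + ∑' k : ℕ, ∫⁻ ω in B,
            Set.indicator {ω' | bs k ≤ Y' ω'} (fun _ => ENNReal.ofReal (bs (k + 1))) ω ∂μ := by
          rw [lintegral_tsum (fun k => ((measurable_const.indicator (hsets k)).aemeasurable))]
      _ = ENNReal.ofReal b * μ B +
            ∑' k : ℕ, ENNReal.ofReal (bs (k + 1)) * μ ({ω' | bs k ≤ Y' ω'} ∩ B) := by
          congr 1
          refine tsum_congr (fun k => ?_)
          rw [lintegral_indicator_const (hsets k), Measure.restrict_apply (hsets k)]
  -- Step 4: bound each term by the tail bound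
  have h4 : ∑' k : ℕ, ENNReal.ofReal (bs (k + 1)) * μ ({ω' | bs k ≤ Y' ω'} ∩ B) ≤ S := by
    refine ENNReal.tsum_le_tsum (fun k => ?_)
    have hmeq : μ ({ω' | bs k ≤ Y' ω'} ∩ B) = μ ({ω' | bs k ≤ Y ω'} ∩ B) := by
      refine measure_congr ?_
      filter_upwards [hYY'] with ω hω
      change (bs k ≤ Y' ω ∧ ω ∈ B) = (bs k ≤ Y ω ∧ ω ∈ B)
      rw [hω]
    have hsub : {ω' | bs k ≤ Y ω'} ∩ B ⊆ {ω | X ω ≤ a ∧ bs k ≤ Y ω} :=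
      fun ω hω => ⟨hω.2.1, hω.1⟩
    have hμle : μ ({ω' | bs k ≤ Y' ω'} ∩ B) ≤ ENNReal.ofReal (etil (bs k)) := by
      rw [hmeq]
      refine le_trans (measure_mono hsub) ?_
      rw [← ENNReal.ofReal_toReal (measure_ne_top μ _)]
      exact ENNReal.ofReal_le_ofReal (hbound (bs k) (hbspos k))
    calc ENNReal.ofReal (bs (k + 1)) * μ ({ω' | bs k ≤ Y' ω'} ∩ B)
        ≤ ENNReal.ofReal (bs (k + 1)) * ENNReal.ofReal (etil (bs k)) :=
          mul_le_mul_right hμle _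
      _ = ENNReal.ofReal (bs (k + 1) * etil (bs k)) :=
          (ENNReal.ofReal_mul (hbspos (k + 1)).le).symm
  -- Combine
  have h5 : ENNReal.ofReal (b + δ) * μ B ≤ ENNReal.ofReal b * μ B + S := by
    calc ENNReal.ofReal (b + δ) * μ B ≤ ∫⁻ ω in B, ENNReal.ofReal (Y ω) ∂μ := h2
      _ = ∫⁻ ω in B, ENNReal.ofReal (Y' ω) ∂μ := hYlint
      _ ≤ _ := le_trans h3 (add_le_add_right h4 _)
  have h6 : ENNReal.ofReal δ * μ B ≤ S := by
    have hfin : ENNReal.ofReal b * μ B ≠ ⊤ := ENNReal.mul_ne_top ENNReal.ofReal_ne_top hBfin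
    rw [ENNReal.ofReal_add hb.le hδ.le, add_mul] at h5
    exact (ENNReal.add_le_add_iff_left hfin).mp h5
  calc μ B = ENNReal.ofReal (1 / δ) * (ENNReal.ofReal δ * μ B) := by
        rw [← mul_assoc, ← ENNReal.ofReal_mul (by positivity), one_div,
          inv_mul_cancel₀ hδ.ne', ENNReal.ofReal_one, one_mul]
    _ ≤ ENNReal.ofReal (1 / δ) * S := mul_le_mul_right h6 _
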